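/- With notation as in parenthesized context: if F is a 2-starter under G with G-stabilizer S = {1, s}, then the (G × ℤ_n)-stabilizer of the graph H constructed from F equals S × ℤ_n, a subgroup of order 2n. -/

import Mathlib

open SimpleGraph

/-- The image of a graph on `G ∪ {∞}` under right multiplication by `g` (with `∞ g = ∞`). -/
def shiftG {G : Type*} [Group G] (F : SimpleGraph (Option G)) (g : G) :
    SimpleGraph (Option G) :=
  F.map (Equiv.optionCongr (Equiv.mulRight g)).toEmbedding

/-- The `G`-stabilizer of a graph on `G ∪ {∞}`. -/
def stabG {G : Type*} [Group G] (F : SimpleGraph (Option G)) : Set G :=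
  {g | shiftG F g = F}

/-- A `k`-factor: a spanning `k`-regular subgraph of the complete graph. -/
def IsKFactor {V : Type*} (k : ℕ) (F : SimpleGraph V) : Prop :=
  ∀ v : V, (F.neighborSet v).ncard = k

/-- A `k`-factorization: a set of `k`-factors whose edges partition the complete graph. -/
def IsKFactorization {V : Type*} (k : ℕ) (𝓕 : Set (SimpleGraph V)) : Prop :=
  (∀ F ∈ 𝓕, IsKFactor k F) ∧
  ∀ u v : V, u ≠ v → ∃! F, F ∈ 𝓕 ∧ F.Adj u v

/-- A family of graphs on `G ∪ {∞}` is `1`-rotational if it is closed under the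
right multiplication action of `G`. -/
def IsRotational {G : Type*} [Group G] (𝓕 : Set (SimpleGraph (Option G))) : Prop :=
  ∀ F ∈ 𝓕, ∀ g : G, shiftG F g ∈ 𝓕

/-- The difference list of a graph on `G ∪ {∞}` covers every nonidentity element of `G`. -/
def DiffCovers {G : Type*} [Group G] (F : SimpleGraph (Option G)) : Prop :=
  ∀ d : G, d ≠ 1 → ∃ a b : G, F.Adj (some a) (some b) ∧ a * b⁻¹ = d

/-- A `k`-starter under `G`: a `k`-factor whose `G`-stabilizer has order `k` and whose
difference list covers `G ∖ {1}`. -/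
def IsStarter {G : Type*} [Group G] (k : ℕ) (F : SimpleGraph (Option G)) : Prop :=
  IsKFactor k F ∧ (stabG F).ncard = k ∧ DiffCovers F

/-- The graph `H` on `(G × ℤ_n) ∪ {∞}` constructed from a `2`-factor `F` of the complete
graph on `G ∪ {∞}`: join `∞` to `(x,k)` for `x ~ ∞` in `F`; join `(x,k)` to `(x,r)` for
`x ~ ∞` in `F` and `k ≠ r`; join `(x,k)` to `(y,r)` for every edge `[x,y]` of `F`
avoiding `∞`. -/
def Hgraph {G : Type*} [Group G] (F : SimpleGraph (Option G)) (n : ℕ) :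
    SimpleGraph (Option (G × Multiplicative (ZMod n))) :=
  SimpleGraph.fromRel (fun u v =>
    (∃ (x : G) (k : Multiplicative (ZMod n)),
        F.Adj none (some x) ∧ u = none ∧ v = some (x, k)) ∨
    (∃ (x : G) (k r : Multiplicative (ZMod n)),
        F.Adj none (some x) ∧ k ≠ r ∧ u = some (x, k) ∧ v = some (x, r)) ∨
    (∃ (x y : G) (k r : Multiplicative (ZMod n)),
        F.Adj (some x) (some y) ∧ u = some (x, k) ∧ v = some (y, r)))

lemma mem_stabG_iff {G : Type*} [Group G] (F : SimpleGraph (Option G)) (g : G) :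
    g ∈ stabG F ↔ ∀ a b : Option G,
      F.Adj (Option.map (· * g) a) (Option.map (· * g) b) ↔ F.Adj a b := by
  set e := Equiv.optionCongr (Equiv.mulRight g) with hedef
  have he : ∀ a : Option G, e a = Option.map (· * g) a := by
    intro a; simp [hedef, Equiv.optionCongr]
  constructor
  · intro h a b
    rw [← he, ← he]
    conv_lhs => rw [← h]
    exact SimpleGraph.map_adj_apply
  · intro h
    show shiftG F g = F
    ext u v
    rw [shiftG, SimpleGraph.map_adj]
    constructor
    · rintro ⟨a, b, hab, rfl, rfl⟩
      exact (by simpa [he] using (h a b).2 hab : F.Adj (e a) (e b))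
    · intro huv
      refine ⟨e.symm u, e.symm v, ?_, by simp [hedef], by simp [hedef]⟩
      have := h (e.symm u) (e.symm v)
      rw [← he, ← he, Equiv.apply_symm_apply, Equiv.apply_symm_apply] at this
      exact this.1 huv

lemma H_adj_none {G : Type*} [Group G] (F : SimpleGraph (Option G)) (n : ℕ)
    (x : G) (k : Multiplicative (ZMod n)) :
    (Hgraph F n).Adj none (some (x, k)) ↔ F.Adj none (some x) := by
  rw [Hgraph, SimpleGraph.fromRel_adj]
  constructor
  · rintro ⟨-, h | h⟩
    · rcases h with ⟨x', k', h, -, hv⟩ | ⟨_,_,_,_,_,h,_⟩ | ⟨_,_,_,_,_,h,_⟩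
      · cases hv; exact h
      · cases h
      · cases h
    · rcases h with ⟨_,_,_,_,h⟩ | ⟨_,_,_,_,_,_,h⟩ | ⟨_,_,_,_,_,_,h⟩ <;> cases h
  · intro h
    exact ⟨by simp, Or.inl (Or.inl ⟨x, k, h, rfl, rfl⟩)⟩

lemma H_adj_none' {G : Type*} [Group G] (F : SimpleGraph (Option G)) (n : ℕ)
    (x : G) (k : Multiplicative (ZMod n)) :
    (Hgraph F n).Adj (some (x, k)) none ↔ F.Adj none (some x) := by
  rw [SimpleGraph.adj_comm]; exact H_adj_none F n x k

lemma H_adj_some {G : Type*} [Group G] (F : SimpleGraph (Option G)) (n : ℕ)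
    (x y : G) (k r : Multiplicative (ZMod n)) :
    (Hgraph F n).Adj (some (x, k)) (some (y, r)) ↔
      (x = y ∧ k ≠ r ∧ F.Adj none (some x)) ∨ F.Adj (some x) (some y) := by
  rw [Hgraph, SimpleGraph.fromRel_adj]
  constructor
  · rintro ⟨hne, h | h⟩
    · rcases h with ⟨_,_,_,h,_⟩ | ⟨x',k',r',h,hkr,hu,hv⟩ | ⟨x',y',k',r',h,hu,hv⟩
      · cases h
      · cases hu; cases hv; exact Or.inl ⟨rfl, hkr, h⟩
      · cases hu; cases hv; exact Or.inr h
    · rcases h with ⟨_,_,_,h,_⟩ | ⟨x',k',r',h,hkr,hu,hv⟩ | ⟨x',y',k',r',h,hu,hv⟩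
      · cases h
      · cases hu; cases hv; exact Or.inl ⟨rfl, Ne.symm hkr, h⟩
      · cases hu; cases hv; exact Or.inr h.symm
  · rintro (⟨rfl, hkr, h⟩ | h)
    · exact ⟨by simpa using hkr, Or.inl (Or.inr (Or.inl ⟨x, k, r, h, hkr, rfl, rfl⟩))⟩
    · refine ⟨?_, Or.inl (Or.inr (Or.inr ⟨x, y, k, r, h, rfl, rfl⟩))⟩
      simp only [Ne, Option.some_inj, Prod.mk.injEq]
      rintro ⟨rfl, -⟩
      exact F.loopless.irrefl _ h

lemma key_iff {G : Type*} [Group G] (n : ℕ) (F : SimpleGraph (Option G))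
    (g : G) (t : Multiplicative (ZMod n)) :
    (g, t) ∈ stabG (Hgraph F n) ↔ g ∈ stabG F := by
  rw [mem_stabG_iff, mem_stabG_iff]
  constructor
  · intro h a b
    match a, b with
    | none, none => simp
    | none, some x =>
        have := h none (some (x, 1))
        rw [Option.map_none, Option.map_some, Prod.mk_mul_mk, one_mul,
          H_adj_none, H_adj_none] at this
        simpa using this
    | some x, none =>
        have := h none (some (x, 1))
        rw [Option.map_none, Option.map_some, Prod.mk_mul_mk, one_mul,
          H_adj_none, H_adj_none] at this
        simp only [Option.map_some, Option.map_none]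
        rw [F.adj_comm, F.adj_comm (some x) none]
        simpa using this
    | some x, some y =>
        by_cases hxy : x = y
        · subst hxy; simp
        · have := h (some (x, 1)) (some (y, 1))
          rw [Option.map_some, Option.map_some, Prod.mk_mul_mk, Prod.mk_mul_mk,
            H_adj_some, H_adj_some] at this
          simp only [mul_left_inj, hxy, ne_eq, not_true_eq_false, false_and, and_false,
            false_or] at this
          simpa using this
  · intro h u v
    have h1 : ∀ x : G, F.Adj none (some (x * g)) ↔ F.Adj none (some x) := by
      intro x; simpa using h none (some x)
    have h2 : ∀ x y : G, F.Adj (some (x * g)) (some (y * g)) ↔ F.Adj (some x) (some y) := by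
      intro x y; simpa using h (some x) (some y)
    match u, v with
    | none, none => simp
    | none, some (x, k) =>
        rw [Option.map_none, Option.map_some, Prod.mk_mul_mk, H_adj_none, H_adj_none]
        exact h1 x
    | some (x, k), none =>
        rw [Option.map_none, Option.map_some, Prod.mk_mul_mk, H_adj_none', H_adj_none']
        exact h1 x
    | some (x, k), some (y, r) =>
        rw [Option.map_some, Option.map_some, Prod.mk_mul_mk, Prod.mk_mul_mk,
          H_adj_some, H_adj_some]
        simp [mul_left_inj, h1 x, h2 x y]

theorem stmt10 {G : Type*} [Group G] [Fintype G] (n : ℕ) (hn : 1 ≤ n)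
    (F : SimpleGraph (Option G)) (hF : IsStarter 2 F) :
    stabG (Hgraph F n) = (stabG F) ×ˢ (Set.univ : Set (Multiplicative (ZMod n))) ∧
    (stabG (Hgraph F n)).ncard = 2 * n := by
  haveI : NeZero n := ⟨by omega⟩
  have heq : stabG (Hgraph F n) = (stabG F) ×ˢ (Set.univ : Set (Multiplicative (ZMod n))) := by
    ext ⟨g, t⟩
    rw [Set.mem_prod]
    simpa using key_iff n F g t
  refine ⟨heq, ?_⟩
  rw [heq, ← Nat.card_coe_set_eq, Nat.card_congr (Equiv.Set.prod _ _), Nat.card_prod,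
    Nat.card_coe_set_eq, Nat.card_coe_set_eq, hF.2.1, Set.ncard_univ,
    Nat.card_congr Multiplicative.toAdd, Nat.card_zmod]
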